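/- arXiv:1903.04577 — 4 statements merged into one kernel-verified Lean document; each statement's English description precedes it below -/
import Mathlib

section
/- If p = 1 + b + ... + b^(q-1) is a Brazilian prime (b ≥ 2, q ≥ 3) and p is also a Sophie Germain prime (2p + 1 is prime), then p ≡ 2 (mod 3), q ≡ 2 (mod 3), and b ≡ 1 (mod 3). -/
theorem stmt_1 (b q p : ℕ) (hb : 2 ≤ b) (hq : 3 ≤ q)
    (hp : p = ∑ i ∈ Finset.range q, b ^ i) (hpp : p.Prime)
    (hsg : (2 * p + 1).Prime) :
    p % 3 = 2 ∧ q % 3 = 2 ∧ b % 3 = 1 := by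
  have hp7 : 7 ≤ p := by
    rw [hp]
    calc 7 ≤ ∑ i ∈ Finset.range 3, b ^ i := by
          simp [Finset.sum_range_succ]; nlinarith
      _ ≤ _ := Finset.sum_le_sum_of_subset (Finset.range_subset_range.mpr hq)
  have hp3 : p % 3 = 2 := by
    have h0 : ¬ (3 ∣ p) := by
      intro h; rcases hpp.eq_one_or_self_of_dvd 3 h with h | h <;> omega
    have h1 : ¬ (3 ∣ 2 * p + 1) := by
      intro h; rcases hsg.eq_one_or_self_of_dvd 3 h with h | h <;> omega
    omega
  have hzp : (p : ZMod 3) = 2 := by rw [← ZMod.natCast_mod, hp3]; rfl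
  have hsum : (∑ i ∈ Finset.range q, (b : ZMod 3) ^ i) = 2 := by
    rw [← hzp, hp]; push_cast; ring
  have hb1 : b % 3 = 1 := by
    rcases (show b % 3 = 0 ∨ b % 3 = 1 ∨ b % 3 = 2 by omega) with h | h | h
    · exfalso
      have hb0 : (b : ZMod 3) = 0 := by rw [← ZMod.natCast_mod, h]; rfl
      obtain ⟨m, rfl⟩ : ∃ m, q = m + 1 := ⟨q - 1, by omega⟩
      rw [hb0, Finset.sum_range_succ'] at hsum
      simp at hsum
      exact absurd hsum (by decide)
    · exact h
    · exfalso
      have hb2 : (b : ZMod 3) = 2 := by rw [← ZMod.natCast_mod, h]; rfl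
      rw [hb2] at hsum
      have hg := geom_sum_mul (2 : ZMod 3) q
      rw [hsum] at hg
      have h2q : (2 : ZMod 3) ^ q = 0 := by
        have : (2 : ZMod 3) ^ q = 2 * (2 - 1) + 1 := by rw [hg]; ring
        rw [this]; decide
      exact pow_ne_zero q (by decide : (2 : ZMod 3) ≠ 0) h2q
  have hbz : (b : ZMod 3) = 1 := by rw [← ZMod.natCast_mod, hb1]; rfl
  rw [hbz] at hsum
  simp at hsum
  have hq3 : q % 3 = 2 := by
    rcases (show q % 3 = 0 ∨ q % 3 = 1 ∨ q % 3 = 2 by omega) with h | h | h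
    · have hz : (q : ZMod 3) = 0 := by rw [← ZMod.natCast_mod, h]; rfl
      rw [hz] at hsum; exact absurd hsum (by decide)
    · have hz : (q : ZMod 3) = 1 := by rw [← ZMod.natCast_mod, h]; rfl
      rw [hz] at hsum; exact absurd hsum (by decide)
    · exact h
  exact ⟨hp3, hq3, hb1⟩
end

section
/- The only prime p that is both a Brazilian prime and a safe prime is p = 7. -/
lemma geom2 (m : ℕ) : ∑ i ∈ Finset.range m, 2 ^ i = 2 ^ m - 1 := by
  induction m with
  | zero => simp
  | succ n ih =>
    rw [Finset.sum_range_succ, ih]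
    have h1 : 1 ≤ 2 ^ n := Nat.one_le_two_pow
    have h2 : 2 ^ (n + 1) = 2 * 2 ^ n := by ring
    omega

lemma factor2 (k : ℕ) : 2 ^ (2 * k) - 1 = (2 ^ k + 1) * (2 ^ k - 1) := by
  have h1 : 1 ≤ 2 ^ k := Nat.one_le_two_pow
  obtain ⟨c, hc⟩ : ∃ c, 2 ^ k = c + 1 := ⟨2 ^ k - 1, by omega⟩
  have h2 : 2 ^ (2 * k) = 2 ^ k * 2 ^ k := by rw [two_mul, pow_add]
  rw [h2, hc, Nat.add_sub_cancel]
  have e1 : (c + 1) * (c + 1) = c * c + 2 * c + 1 := by ring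
  have e2 : (c + 1 + 1) * c = c * c + 2 * c := by ring
  omega

theorem stmt_6 (p : ℕ) (hp : p.Prime)
    (hB : ∃ b q : ℕ, 1 < b ∧ b < p - 1 ∧ 3 ≤ q ∧ p = ∑ i ∈ Finset.range q, b ^ i)
    (hsafe : Nat.Prime ((p - 1) / 2)) :
    p = 7 := by
  obtain ⟨b, q, hb1, hbp, hq3, hsum⟩ := hB
  obtain ⟨m, rfl⟩ : ∃ m, q = m + 1 := ⟨q - 1, by omega⟩
  have hm : 2 ≤ m := by omega
  set S := ∑ i ∈ Finset.range m, b ^ i with hSdef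
  have hps : p = b * S + 1 := by
    rw [hsum, Finset.sum_range_succ']
    simp only [pow_zero, pow_succ, ← Finset.sum_mul]
    rw [mul_comm]
  have hSge : b + 1 ≤ S := by
    have h2 : ∑ i ∈ Finset.range 2, b ^ i ≤ S :=
      Finset.sum_le_sum_of_subset (Finset.range_subset_range.2 hm)
    simp [Finset.sum_range_succ] at h2
    omega
  have h6 : 6 ≤ b * S := by
    calc (6 : ℕ) = 2 * 3 := by norm_num
    _ ≤ b * S := Nat.mul_le_mul (by omega) (by omega)
  have hpge : 7 ≤ p := by omega
  have hodd : p % 2 = 1 := Nat.odd_iff.mp (hp.odd_of_ne_two (by omega))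
  set r := (p - 1) / 2 with hrdef
  have hpr : p - 1 = 2 * r := by omega
  have hbS : b * S = 2 * r := by omega
  have hr3 : 3 ≤ r := by omega
  have hrdvd : r ∣ b * S := ⟨2, by rw [hbS]; ring⟩
  have hb2 : b = 2 ∧ S = r := by
    rcases (Nat.Prime.dvd_mul hsafe).mp hrdvd with h | h
    · obtain ⟨k, hk⟩ := h
      exfalso
      have hk1 : 1 ≤ k := by
        rcases Nat.eq_zero_or_pos k with h0 | h0
        · subst h0; simp at hk; omega
        · exact h0
      have heq : r * (k * S) = r * 2 := by rw [← mul_assoc, ← hk, hbS]; ring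
      have hks : k * S = 2 := Nat.eq_of_mul_eq_mul_left (by omega) heq
      have : S ≤ k * S := Nat.le_mul_of_pos_left S hk1
      omega
    · obtain ⟨t, ht⟩ := h
      have heq : (b * t) * r = 2 * r := by
        calc (b * t) * r = b * (r * t) := by ring
        _ = 2 * r := by rw [← ht]; exact hbS
      have hbt : b * t = 2 := Nat.eq_of_mul_eq_mul_right (by omega) heq
      have hbd : b ∣ 2 := ⟨t, hbt.symm⟩
      have hbe : b = 2 := by have := Nat.le_of_dvd (by norm_num) hbd; omega
      refine ⟨hbe, ?_⟩
      rw [hbe] at hbt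
      have : t = 1 := by omega
      rw [ht, this, mul_one]
  obtain ⟨hb, hSr⟩ := hb2
  subst hb
  have hSval : S = 2 ^ m - 1 := by rw [hSdef]; exact geom2 m
  have hm2 : m = 2 := by
    by_contra hne
    rcases Nat.even_or_odd m with he | ho
    · obtain ⟨k, hk⟩ := he
      have hk2 : 2 ≤ k := by omega
      have hrv : r = (2 ^ k + 1) * (2 ^ k - 1) := by
        rw [← hSr, hSval, hk, ← two_mul, factor2 k]
      have hr' : Nat.Prime ((2 ^ k + 1) * (2 ^ k - 1)) := by rwa [hrv] at hsafe
      have h4 : 4 ≤ 2 ^ k := by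
        calc (4 : ℕ) = 2 ^ 2 := by norm_num
        _ ≤ 2 ^ k := Nat.pow_le_pow_right (by norm_num) hk2
      rcases Nat.prime_mul_iff.mp hr' with ⟨_, h⟩ | ⟨_, h⟩ <;> omega
    · obtain ⟨k, hk⟩ := ho
      have hk2 : 2 ≤ k + 1 := by omega
      have hpval : p = 2 ^ (m + 1) - 1 := by
        have h1 : 1 ≤ 2 ^ m := Nat.one_le_two_pow
        have h2 : 2 ^ (m + 1) = 2 * 2 ^ m := by ring
        rw [hps, hSval]; omega
      have hpv : p = (2 ^ (k + 1) + 1) * (2 ^ (k + 1) - 1) := by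
        rw [hpval, hk, show 2 * k + 1 + 1 = 2 * (k + 1) by ring, factor2 (k + 1)]
      have hp' : Nat.Prime ((2 ^ (k + 1) + 1) * (2 ^ (k + 1) - 1)) := by rwa [hpv] at hp
      have h4 : 4 ≤ 2 ^ (k + 1) := by
        calc (4 : ℕ) = 2 ^ 2 := by norm_num
        _ ≤ 2 ^ (k + 1) := Nat.pow_le_pow_right (by norm_num) hk2
      rcases Nat.prime_mul_iff.mp hp' with ⟨_, h⟩ | ⟨_, h⟩ <;> omega
  subst hm2
  have : S = 3 := by rw [hSval]; norm_num
  omega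
end

section
/- If p = 1 + b + ... + b^(q-1) is prime with b ≥ 2 and q ≥ 3, and 2p + 1 is also prime, then q ≠ 3; that is, no Sophie Germain prime is a base-b repunit of length 3 for any b ≥ 2. -/
theorem stmt_17 (b q p : ℕ) (hb : 2 ≤ b) (hq : 3 ≤ q)
    (hp : p = ∑ i ∈ Finset.range q, b ^ i) (hpp : p.Prime)
    (hsg : (2 * p + 1).Prime) :
    q ≠ 3 := by
  intro h
  subst h
  have hp' : p = 1 + b + b * b := by
    simp [Finset.sum_range_succ, pow_succ] at hp
    omega
  set k := b / 3 with hk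
  set r := b % 3 with hr
  have hbm : b = 3 * k + r := by omega
  have hsq : b * b = 3 * (3 * k * k + 2 * k * r) + r * r := by rw [hbm]; ring
  have hr3 : r < 3 := Nat.mod_lt _ (by norm_num)
  interval_cases r
  · have h3 : 3 ∣ 2 * p + 1 := by omega
    have := (Nat.Prime.eq_one_or_self_of_dvd hsg 3 h3)
    omega
  · have h3 : 3 ∣ p := by omega
    have := (Nat.Prime.eq_one_or_self_of_dvd hpp 3 h3)
    omega
  · have h3 : 3 ∣ 2 * p + 1 := by omega
    have := (Nat.Prime.eq_one_or_self_of_dvd hsg 3 h3)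
    omega
end

section
/- If p = 1 + b + ... + b^(q-1) is prime with b ≥ 2 and q ≥ 3, and 2p + 1 is also prime, then q ≠ 7 and q ≠ 13; that is, the repunit length q of a Brazilian Sophie Germain prime cannot be congruent to 1 modulo 3. -/
theorem stmt_18 (b q p : ℕ) (hb : 2 ≤ b) (hq : 3 ≤ q)
    (hp : p = ∑ i ∈ Finset.range q, b ^ i) (hpp : p.Prime)
    (hsg : (2 * p + 1).Prime) :
    q ≠ 7 ∧ q ≠ 13 ∧ q % 3 ≠ 1 := by
  -- p ≥ 7
  have hp7 : 7 ≤ p := by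
    have hsub : Finset.range 3 ⊆ Finset.range q := Finset.range_subset_range.mpr hq
    have hle : ∑ i ∈ Finset.range 3, b ^ i ≤ ∑ i ∈ Finset.range q, b ^ i :=
      Finset.sum_le_sum_of_subset hsub
    have h3 : ∑ i ∈ Finset.range 3, b ^ i = 1 + b + b ^ 2 := by
      simp [Finset.sum_range_succ]
    nlinarith [hle, h3, hp]
  have hdvd_p : ¬ (3 ∣ p) := by
    intro h
    rcases (Nat.Prime.eq_one_or_self_of_dvd hpp 3 h) with h' | h' <;> omega
  have hdvd_sg : ¬ (3 ∣ (2 * p + 1)) := by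
    intro h
    rcases (Nat.Prime.eq_one_or_self_of_dvd hsg 3 h) with h' | h' <;> omega
  have cast_p : ((p : ZMod 3)) = ∑ i ∈ Finset.range q, (b : ZMod 3) ^ i := by
    rw [hp]; push_cast; rfl
  have hnp : (p : ZMod 3) ≠ 0 := fun h =>
    hdvd_p ((ZMod.natCast_eq_zero_iff p 3).mp h)
  have hnsg : (p : ZMod 3) ≠ 1 := by
    intro h
    apply hdvd_sg
    have : ((2 * p + 1 : ℕ) : ZMod 3) = 0 := by push_cast [h]; decide
    exact (ZMod.natCast_eq_zero_iff _ 3).mp this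
  suffices hmod : q % 3 ≠ 1 by
    exact ⟨by omega, by omega, hmod⟩
  intro h1
  have hbm : b % 3 = 0 ∨ b % 3 = 1 ∨ b % 3 = 2 := by omega
  have hbcast : (b : ZMod 3) = ((b % 3 : ℕ) : ZMod 3) := by
    conv_lhs => rw [← Nat.mod_add_div b 3]
    push_cast
    simp [show (3:ZMod 3) = 0 from rfl]
  rcases hbm with h | h | h
  · -- b ≡ 0 : p ≡ 1
    apply hnsg
    rw [cast_p, hbcast, h]
    rw [show ((0 : ℕ) : ZMod 3) = 0 from rfl, zero_geom_sum]
    simp [show q ≠ 0 by omega]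
  · -- b ≡ 1 : p ≡ q ≡ 1
    apply hnsg
    rw [cast_p, hbcast, h]
    rw [show ((1 : ℕ) : ZMod 3) = 1 from rfl, one_geom_sum]
    conv_lhs => rw [← Nat.mod_add_div q 3, h1]
    push_cast
    simp [show (3:ZMod 3) = 0 from rfl]
  · -- b ≡ 2 : p ≡ 0 or 1
    have h2 : (b : ZMod 3) = -1 := by rw [hbcast, h]; decide
    rw [h2, neg_one_geom_sum] at cast_p
    by_cases he : Even q
    · apply hnp; rw [cast_p]; simp [he]
    · apply hnsg; rw [cast_p]; simp [he]
end
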